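/- Let (t_j)_{j≥-1} be nonnegative reals with t_{-1} > 0, Σ_{k≥0} t_{k-1} = 1, and Σ_{j≥1} j t_{j-1} < 1. Let (x_k)_{k≥0} be the solution of x_k = Σ_{j=-1}^{k} t_j x_{k-j} (k ≥ 0) with given x_0 > 0. Then (x_k) is nondecreasing and lim_{k→∞} x_k = x_0 t_{-1} / (1 − Σ_{j=1}^{∞} j t_{j-1}). -/

import Mathlib

open Filter Finset

private lemma aux_partial_le (s : ℕ → ℝ) (hs : ∀ j, 0 ≤ s j) (hsum : Summable s)
    (hsum1 : ∑' k, s k = 1) (m : ℕ) : ∑ j ∈ range m, s j ≤ 1 := by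
  calc ∑ j ∈ range m, s j ≤ ∑' k, s k := Summable.sum_le_tsum _ (fun i _ => hs i) hsum
  _ = 1 := hsum1

private lemma aux_mono (s : ℕ → ℝ) (hs : ∀ j, 0 ≤ s j) (hs0 : 0 < s 0)
    (hsum : Summable s) (hsum1 : ∑' k, s k = 1)
    (x : ℕ → ℝ) (hx0 : 0 < x 0)
    (hrec : ∀ k, x k = ∑ j ∈ range (k + 2), s j * x (k + 1 - j)) :
    ∀ k, x k ≤ x (k + 1) := by
  intro k
  induction k using Nat.strong_induction_on with
  | _ k ih =>
  have hmono : ∀ j, j ≤ k → ∀ i, i ≤ j → x i ≤ x j := by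
    intro j
    induction j with
    | zero => intro _ i hi; rw [Nat.le_zero.mp hi]
    | succ n ihn =>
      intro hnk i hi
      by_cases hin : i ≤ n
      · exact (ihn (by omega) i hin).trans (ih n (by omega))
      · have : i = n + 1 := by omega
        simp [this]
  have hx0k : x 0 ≤ x k := hmono k le_rfl 0 (Nat.zero_le _)
  have hxk_pos : 0 < x k := lt_of_lt_of_le hx0 hx0k
  have hxrec := hrec k
  rw [Finset.sum_range_succ'] at hxrec
  have hbound : ∑ j ∈ range (k + 1), s (j + 1) * x (k + 1 - (j + 1)) ≤ (1 - s 0) * x k := by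
    calc ∑ j ∈ range (k + 1), s (j + 1) * x (k + 1 - (j + 1))
        ≤ ∑ j ∈ range (k + 1), s (j + 1) * x k := by
          apply Finset.sum_le_sum
          intro j hj
          exact mul_le_mul_of_nonneg_left (hmono k le_rfl _ (by omega)) (hs _)
      _ = (∑ j ∈ range (k + 1), s (j + 1)) * x k := by rw [Finset.sum_mul]
      _ ≤ (1 - s 0) * x k := by
          apply mul_le_mul_of_nonneg_right _ hxk_pos.le
          have h2 := aux_partial_le s hs hsum hsum1 (k + 2)
          rw [Finset.sum_range_succ'] at h2
          linarith
  have hx1 : x (k + 1 - 0) = x (k + 1) := rfl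
  have hfin : s 0 * x k ≤ s 0 * x (k + 1) := by
    rw [hx1] at hxrec
    linarith
  exact le_of_mul_le_mul_left hfin hs0

private lemma aux_main (s : ℕ → ℝ) (hs : ∀ j, 0 ≤ s j) (hs0 : 0 < s 0)
    (hsum : Summable s) (hsum1 : ∑' k, s k = 1)
    (hmom : Summable fun j : ℕ => (j : ℝ) * s j)
    (hγ : (∑' j : ℕ, (j : ℝ) * s j) < 1)
    (x : ℕ → ℝ) (hx0 : 0 < x 0)
    (hrec : ∀ k, x k = ∑ j ∈ range (k + 2), s j * x (k + 1 - j)) :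
    Tendsto x atTop (nhds (x 0 * s 0 / (1 - ∑' j : ℕ, (j : ℝ) * s j))) := by
  set γ : ℝ := ∑' j : ℕ, (j : ℝ) * s j with hγdef
  have hstep := aux_mono s hs hs0 hsum hsum1 x hx0 hrec
  have hmono : Monotone x := monotone_nat_of_le_succ hstep
  have hxpos : ∀ k, 0 < x k := fun k => hx0.trans_le (hmono (Nat.zero_le k))
  -- differences
  obtain ⟨d, hd0, hdsucc⟩ : ∃ d : ℕ → ℝ, d 0 = x 0 ∧ ∀ k, d (k + 1) = x (k + 1) - x k :=
    ⟨fun n => match n with | 0 => x 0 | k + 1 => x (k + 1) - x k, rfl, fun _ => rfl⟩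
  have hdnn : ∀ n, 0 ≤ d n := by
    rintro (_ | n)
    · rw [hd0]; exact hx0.le
    · rw [hdsucc]; linarith [hstep n]
  have hDx : ∀ m, ∑ i ∈ range (m + 1), d i = x m := by
    intro m
    induction m with
    | zero => simpa using hd0
    | succ n ihn => rw [Finset.sum_range_succ, ihn, hdsucc]; ring
  -- tails
  obtain ⟨T, hT_def⟩ : ∃ T : ℕ → ℝ, ∀ m, T m = 1 - ∑ j ∈ range m, s j := ⟨_, fun _ => rfl⟩
  have hTnn : ∀ m, 0 ≤ T m := by
    intro m; rw [hT_def]; linarith [aux_partial_le s hs hsum hsum1 m]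
  have hTsub : ∀ m, T m = T (m + 1) + s m := by
    intro m; rw [hT_def, hT_def, Finset.sum_range_succ]; ring
  have hTtail : ∀ m, T m = ∑' i, s (i + m) := by
    intro m
    have h := Summable.sum_add_tsum_nat_add m hsum
    rw [hsum1] at h
    rw [hT_def]; linarith
  have hT1 : T 1 = 1 - s 0 := by rw [hT_def]; simp
  -- key renewal identity
  have hkey : ∀ k, ∑ i ∈ range (k + 1), T (k + 2 - i) * d i = s 0 * d (k + 1) := by
    intro k
    have hswap : ∑ i ∈ range (k + 1), ∑ j ∈ range (k + 2 - i), s j * d i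
        = ∑ j ∈ range (k + 2), ∑ i ∈ range (min (k + 1) (k + 2 - j)), s j * d i := by
      apply Finset.sum_comm'
      intro i j
      simp only [Finset.mem_range, lt_min_iff]
      omega
    have expand : ∑ i ∈ range (k + 1), T (k + 2 - i) * d i
        = (∑ i ∈ range (k + 1), d i) - ∑ i ∈ range (k + 1), ∑ j ∈ range (k + 2 - i), s j * d i := by
      rw [← Finset.sum_sub_distrib]
      apply Finset.sum_congr rfl
      intro i _
      rw [hT_def, sub_mul, one_mul, Finset.sum_mul]
    have h0 : ∑ i ∈ range (min (k + 1) (k + 2 - 0)), s 0 * d i = s 0 * x k := by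
      have hmin : min (k + 1) (k + 2 - 0) = k + 1 := by omega
      rw [hmin, ← Finset.mul_sum, hDx k]
    have h1 : ∀ j ∈ range (k + 1), ∑ i ∈ range (min (k + 1) (k + 2 - (j + 1))), s (j + 1) * d i
        = s (j + 1) * x (k - j) := by
      intro j hj
      simp only [Finset.mem_range] at hj
      have hmin : min (k + 1) (k + 2 - (j + 1)) = (k - j) + 1 := by omega
      rw [hmin, ← Finset.mul_sum, hDx (k - j)]
    have hxrec := hrec k
    rw [Finset.sum_range_succ'] at hxrec
    have hxr : x k = (∑ j ∈ range (k + 1), s (j + 1) * x (k - j)) + s 0 * x (k + 1) := by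
      rw [hxrec]
      congr 1
      apply Finset.sum_congr rfl
      intro j _
      congr 2
      omega
    calc ∑ i ∈ range (k + 1), T (k + 2 - i) * d i
        = x k - ∑ i ∈ range (k + 1), ∑ j ∈ range (k + 2 - i), s j * d i := by rw [expand, hDx k]
      _ = x k - ∑ j ∈ range (k + 2), ∑ i ∈ range (min (k + 1) (k + 2 - j)), s j * d i := by
            rw [hswap]
      _ = x k - ((∑ j ∈ range (k + 1), s (j + 1) * x (k - j)) + s 0 * x k) := by
            rw [Finset.sum_range_succ', Finset.sum_congr rfl h1, h0]
      _ = s 0 * d (k + 1) := by rw [hdsucc]; linarith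
  -- partial sums of tails
  have hTpartial : ∀ M : ℕ, ∑ m ∈ range M, T (m + 1)
      = (∑ j ∈ range M, (j : ℝ) * s j) + M * T M := by
    intro M
    induction M with
    | zero => simp
    | succ n ihn =>
      rw [Finset.sum_range_succ, ihn, Finset.sum_range_succ]
      have h2 : (n : ℝ) * T n = (n : ℝ) * (T (n + 1) + s n) := by rw [← hTsub n]
      push_cast
      linarith
  have hmom_shift : ∀ M : ℕ, Summable (fun i => ((i + M : ℕ) : ℝ) * s (i + M)) :=
    fun M => (summable_nat_add_iff M).2 hmom
  have hMT : ∀ M : ℕ, (M : ℝ) * T M ≤ ∑' i, ((i + M : ℕ) : ℝ) * s (i + M) := by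
    intro M
    rw [hTtail M, ← tsum_mul_left]
    apply Summable.tsum_le_tsum _ (((summable_nat_add_iff M).2 hsum).mul_left _) (hmom_shift M)
    intro i
    have hle : (M : ℝ) ≤ ((i + M : ℕ) : ℝ) := by push_cast; linarith [Nat.cast_nonneg (α := ℝ) i]
    exact mul_le_mul_of_nonneg_right hle (hs _)
  have htail0 : Tendsto (fun M : ℕ => ∑' i, ((i + M : ℕ) : ℝ) * s (i + M)) atTop (nhds 0) :=
    tendsto_sum_nat_add (fun j : ℕ => (j : ℝ) * s j)
  have hMT0 : Tendsto (fun M : ℕ => (M : ℝ) * T M) atTop (nhds 0) :=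
    squeeze_zero (fun M => mul_nonneg (Nat.cast_nonneg M) (hTnn M)) hMT htail0
  have hTbdd : ∀ M, ∑ m ∈ range M, T (m + 1) ≤ γ := by
    intro M
    rw [hTpartial M]
    have h1 := Summable.sum_add_tsum_nat_add M hmom
    rw [← hγdef] at h1
    linarith [hMT M]
  have hTsummable : Summable (fun m => T (m + 1)) :=
    summable_of_sum_range_le (fun m => hTnn (m + 1)) hTbdd
  have hTtsum : ∑' m, T (m + 1) = γ := by
    refine tendsto_nhds_unique hTsummable.hasSum.tendsto_sum_nat ?_
    have h3 : Tendsto (fun M : ℕ => ∑ j ∈ range M, (j : ℝ) * s j) atTop (nhds γ) :=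
      hmom.hasSum.tendsto_sum_nat
    have h4 := h3.add hMT0
    rw [add_zero] at h4
    exact h4.congr (fun M => (hTpartial M).symm)
  have hT2sum : Summable (fun m => T (m + 2)) := (summable_nat_add_iff 1).2 hTsummable
  have hT2tsum : ∑' m, T (m + 2) = γ - T 1 := by
    have h := Summable.tsum_eq_zero_add hTsummable
    rw [hTtsum] at h
    linarith
  -- the kernel b and its sum α
  set α : ℝ := (γ - (1 - s 0)) / s 0 with hα_def
  obtain ⟨b, hb0, hbsucc⟩ : ∃ b : ℕ → ℝ, b 0 = 0 ∧ ∀ m, b (m + 1) = T (m + 2) / s 0 :=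
    ⟨fun m => match m with | 0 => (0 : ℝ) | m + 1 => T (m + 2) / s 0, rfl, fun _ => rfl⟩
  have hbnn : ∀ m, 0 ≤ b m := by
    rintro (_ | m)
    · rw [hb0]
    · rw [hbsucc]; exact div_nonneg (hTnn _) hs0.le
  have hbsum : Summable b := by
    have h1 : Summable (fun m => b (m + 1)) := by
      apply Summable.congr (hT2sum.div_const (s 0))
      intro m; rw [hbsucc]
    exact (summable_nat_add_iff 1).1 h1
  have hbtsum : ∑' m, b m = α := by
    rw [Summable.tsum_eq_zero_add hbsum, hb0, zero_add]
    have h1 : ∑' m, b (m + 1) = (∑' m, T (m + 2)) / s 0 := by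
      rw [← tsum_div_const]
      exact tsum_congr (fun m => hbsucc m)
    rw [h1, hT2tsum, hT1, hα_def]
  have hα0 : 0 ≤ α := hbtsum ▸ tsum_nonneg hbnn
  have hα1 : α < 1 := by rw [hα_def, div_lt_one hs0]; linarith
  have h1α : 0 < 1 - α := by linarith
  -- bound on partial sums of d
  have hs0α : s 0 * α = γ - T 1 := by
    rw [hα_def, hT1, mul_div_cancel₀ _ (ne_of_gt hs0)]
  have hsum_inner : ∀ N i, i < N → ∑ k ∈ Finset.Ico i N, T (k + 2 - i) ≤ s 0 * α := by
    intro N i hiN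
    rw [Finset.sum_Ico_eq_sum_range]
    have h1 : ∀ m ∈ range (N - i), T (i + m + 2 - i) = T (m + 2) := by
      intro m _; congr 1; omega
    rw [Finset.sum_congr rfl h1]
    calc ∑ m ∈ range (N - i), T (m + 2) ≤ ∑' m, T (m + 2) :=
          Summable.sum_le_tsum _ (fun m _ => hTnn _) hT2sum
      _ = γ - T 1 := hT2tsum
      _ = s 0 * α := hs0α.symm
  have hDrec : ∀ N, ∑ i ∈ range (N + 1), d i ≤ x 0 + α * ∑ i ∈ range N, d i := by
    intro N
    have e1 : ∑ i ∈ range (N + 1), d i = x 0 + ∑ k ∈ range N, d (k + 1) := by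
      rw [Finset.sum_range_succ', hd0]; ring
    have e2 : ∑ k ∈ range N, s 0 * d (k + 1)
        = ∑ k ∈ range N, ∑ i ∈ range (k + 1), T (k + 2 - i) * d i :=
      Finset.sum_congr rfl (fun k _ => (hkey k).symm)
    have e3 : ∑ k ∈ range N, ∑ i ∈ range (k + 1), T (k + 2 - i) * d i
        = ∑ i ∈ range N, ∑ k ∈ Finset.Ico i N, T (k + 2 - i) * d i := by
      apply Finset.sum_comm'
      intro k i
      simp only [Finset.mem_range, Finset.mem_Ico]
      omega
    have e4 : ∑ i ∈ range N, ∑ k ∈ Finset.Ico i N, T (k + 2 - i) * d i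
        ≤ ∑ i ∈ range N, (s 0 * α) * d i := by
      apply Finset.sum_le_sum
      intro i hi
      rw [← Finset.sum_mul]
      exact mul_le_mul_of_nonneg_right (hsum_inner N i (Finset.mem_range.mp hi)) (hdnn i)
    have e5 : s 0 * ∑ k ∈ range N, d (k + 1) ≤ s 0 * (α * ∑ i ∈ range N, d i) := by
      rw [Finset.mul_sum]
      calc ∑ k ∈ range N, s 0 * d (k + 1)
          = ∑ i ∈ range N, ∑ k ∈ Finset.Ico i N, T (k + 2 - i) * d i := by rw [e2, e3]
        _ ≤ ∑ i ∈ range N, (s 0 * α) * d i := e4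
        _ = s 0 * (α * ∑ i ∈ range N, d i) := by rw [← Finset.mul_sum, mul_assoc]
    have e6 : ∑ k ∈ range N, d (k + 1) ≤ α * ∑ i ∈ range N, d i :=
      (mul_le_mul_iff_right₀ hs0).mp e5
    linarith
  have hC : (0:ℝ) < x 0 / (1 - α) := div_pos hx0 h1α
  have hCfix : x 0 + α * (x 0 / (1 - α)) = x 0 / (1 - α) := by
    field_simp
    ring
  have hDbound : ∀ N, ∑ i ∈ range N, d i ≤ x 0 / (1 - α) := by
    intro N
    induction N with
    | zero => simpa using hC.le
    | succ n ihn =>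
      have h2 : α * ∑ i ∈ range n, d i ≤ α * (x 0 / (1 - α)) :=
        mul_le_mul_of_nonneg_left ihn hα0
      linarith [hDrec n]
  have hdsummable : Summable d := summable_of_sum_range_le hdnn hDbound
  -- Cauchy product
  have hb' : Summable (fun m => ‖b m‖) := by
    apply Summable.congr hbsum
    intro m
    rw [Real.norm_eq_abs, abs_of_nonneg (hbnn m)]
  have hd' : Summable (fun m => ‖d m‖) := by
    apply Summable.congr hdsummable
    intro m
    rw [Real.norm_eq_abs, abs_of_nonneg (hdnn m)]
  have hcauchy : ∀ n : ℕ, ∑ i ∈ range (n + 1 + 1), b i * d (n + 1 - i) = d (n + 1) := by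
    intro n
    rw [Finset.sum_range_succ']
    have h1 : ∀ i ∈ range (n + 1), b (i + 1) * d (n + 1 - (i + 1))
        = T (i + 2) / s 0 * d (n - i) := by
      intro i _
      rw [hbsucc]
      congr 2
      omega
    rw [Finset.sum_congr rfl h1, hb0, zero_mul, add_zero]
    have h2 : ∑ i ∈ range (n + 1), T (i + 2) / s 0 * d (n - i)
        = (∑ i ∈ range (n + 1), T (i + 2) * d (n - i)) / s 0 := by
      rw [Finset.sum_div]
      exact Finset.sum_congr rfl (fun i _ => by ring)
    have h3 : ∑ i ∈ range (n + 1), T (i + 2) * d (n - i) = s 0 * d (n + 1) := by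
      calc ∑ i ∈ range (n + 1), T (i + 2) * d (n - i)
          = ∑ i ∈ range (n + 1), T (n + 2 - (n + 1 - 1 - i)) * d (n + 1 - 1 - i) := by
            apply Finset.sum_congr rfl
            intro i hi
            simp only [Finset.mem_range] at hi
            have e1 : n + 2 - (n + 1 - 1 - i) = i + 2 := by omega
            have e2 : n + 1 - 1 - i = n - i := by omega
            rw [e1, e2]
        _ = ∑ i ∈ range (n + 1), T (n + 2 - i) * d i :=
            Finset.sum_range_reflect (fun i => T (n + 2 - i) * d i) (n + 1)
        _ = s 0 * d (n + 1) := hkey n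
    rw [h2, h3, mul_div_cancel_left₀ _ (ne_of_gt hs0)]
  have hprod : α * ∑' n, d n = ∑' n, ∑ i ∈ range (n + 1), b i * d (n - i) := by
    rw [← hbtsum]
    exact tsum_mul_tsum_eq_tsum_sum_range_of_summable_norm hb' hd'
  have hcsum : Summable (fun n => ∑ i ∈ range (n + 1), b i * d (n - i)) :=
    (summable_norm_sum_mul_range_of_summable_norm hb' hd').of_norm
  have hRHS : ∑' n, ∑ i ∈ range (n + 1), b i * d (n - i) = (∑' n, d n) - x 0 := by
    rw [Summable.tsum_eq_zero_add hcsum]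
    have h0 : ∑ i ∈ range (0 + 1), b i * d (0 - i) = 0 := by simp [hb0]
    have h1 : ∑' n : ℕ, ∑ i ∈ range (n + 1 + 1), b i * d (n + 1 - i) = ∑' n : ℕ, d (n + 1) :=
      tsum_congr hcauchy
    rw [h0, zero_add, h1]
    have h2 := Summable.sum_add_tsum_nat_add 1 hdsummable
    rw [Finset.sum_range_one, hd0] at h2
    linarith
  have h1γ : (0:ℝ) < 1 - γ := by linarith
  have hSval : ∑' n, d n = x 0 * s 0 / (1 - γ) := by
    have h1 : α * ∑' n, d n = (∑' n, d n) - x 0 := by rw [hprod, hRHS]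
    have h2 : s 0 * α * (∑' n, d n) = s 0 * ((∑' n, d n) - x 0) := by
      rw [mul_assoc, h1]
    rw [hs0α, hT1] at h2
    rw [eq_div_iff (ne_of_gt h1γ)]
    linear_combination -h2
  have hfinal : Tendsto x atTop (nhds (∑' n, d n)) := by
    have h1 : Tendsto (fun N => ∑ i ∈ range N, d i) atTop (nhds (∑' n, d n)) :=
      hdsummable.hasSum.tendsto_sum_nat
    have h2 : Tendsto (fun N => ∑ i ∈ range (N + 1), d i) atTop (nhds (∑' n, d n)) :=
      h1.comp (tendsto_add_atTop_nat 1)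
    exact h2.congr hDx
  exact hSval ▸ hfinal

/-- Theorem 2 (ii), case `n = 1`: the solution is nondecreasing and converges to
`x_0 t_{-1} / (1 - Σ_j j t_{j-1})`. -/
theorem stmt12 (t : ℤ → ℝ)
    (ht : ∀ j : ℤ, -1 ≤ j → 0 ≤ t j) (ht1 : 0 < t (-1))
    (hsum : Summable fun k : ℕ => t ((k : ℤ) - 1))
    (hsum1 : (∑' k : ℕ, t ((k : ℤ) - 1)) = 1)
    (hmom : Summable fun j : ℕ => (j : ℝ) * t ((j : ℤ) - 1))
    (hγ : (∑' j : ℕ, (j : ℝ) * t ((j : ℤ) - 1)) < 1)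
    (x : ℕ → ℝ) (hx0 : 0 < x 0)
    (hrec : ∀ k : ℕ, x k = ∑ j ∈ Finset.range (k + 2), t ((j : ℤ) - 1) * x (k + 1 - j)) :
    Monotone x ∧
      Tendsto x atTop
        (nhds (x 0 * t (-1) / (1 - ∑' j : ℕ, (j : ℝ) * t ((j : ℤ) - 1)))) := by
  set s : ℕ → ℝ := fun j => t ((j : ℤ) - 1) with hs_def
  have hs : ∀ j : ℕ, 0 ≤ s j := fun j => ht _ (by omega)
  have hs0 : 0 < s 0 := by
    have : ((0 : ℕ) : ℤ) - 1 = -1 := by norm_num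
    rw [hs_def]
    simpa [this] using ht1
  have ht1' : t (-1) = s 0 := by rw [hs_def]; norm_num
  constructor
  · exact monotone_nat_of_le_succ (aux_mono s hs hs0 hsum hsum1 x hx0 hrec)
  · rw [ht1']
    exact aux_main s hs hs0 hsum hsum1 hmom hγ x hx0 hrec
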